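/- Let G be a countable commutative group acting on a measurable space X such that for each g ∈ G the map x ↦ g·x is measurable and the set {x ∈ X : g·x = x} is measurable. Let μ be a probability measure on X such that the action of each g ∈ G is measure-preserving, and assume the action is ergodic in the sense that every measurable set s ⊆ X satisfying g·s = s for all g ∈ G has μ(s) = 0 or μ(s) = 1. Then there exists a subgroup H of G such that for μ-almost every x ∈ X the stabilizer {g ∈ G : g·x = x} equals H. -/

import Mathlib

open MeasureTheory

/-- For an ergodic measure-preserving action of a countable commutative group `G` on a
probability space `(X, μ)`, there is a single subgroup `H` of `G` that equals the
stabilizer of `x` for `μ`-almost every `x`. -/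
theorem exists_subgroup_ae_stabilizer_eq
    {G X : Type*} [CommGroup G] [Countable G] [MeasurableSpace X] [MulAction G X]
    (hmeas : ∀ g : G, Measurable fun x : X => g • x)
    (hfix : ∀ g : G, MeasurableSet {x : X | g • x = x})
    (μ : Measure X) [IsProbabilityMeasure μ]
    (hpres : ∀ g : G, MeasurePreserving (fun x : X => g • x) μ μ)
    (herg : ∀ s : Set X, MeasurableSet s → (∀ g : G, (fun x : X => g • x) '' s = s) →
      μ s = 0 ∨ μ s = 1) :
    ∃ H : Subgroup G, ∀ᵐ x ∂μ, MulAction.stabilizer G x = H := by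
  classical
  -- each fixed-point set is invariant, hence has measure 0 or 1
  have h01 : ∀ g : G, μ {x : X | g • x = x} = 0 ∨ μ {x : X | g • x = x} = 1 := by
    intro g
    refine herg _ (hfix g) ?_
    intro h
    ext x
    constructor
    · rintro ⟨y, hy, rfl⟩
      show g • h • y = h • y
      rw [smul_comm, hy]
    · intro hx
      refine ⟨h⁻¹ • x, ?_, by simp⟩
      show g • h⁻¹ • x = h⁻¹ • x
      rw [smul_comm, hx]
  -- the candidate subgroup
  let H : Subgroup G :=
  { carrier := {g : G | ∀ᵐ x ∂μ, g • x = x}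
    one_mem' := by
      show ∀ᵐ x ∂μ, (1 : G) • x = x
      filter_upwards with x
      simp
    mul_mem' := by
      intro a b ha hb
      show ∀ᵐ x ∂μ, (a * b) • x = x
      filter_upwards [ha, hb] with x ha hb
      rw [mul_smul, hb, ha]
    inv_mem' := by
      intro a ha
      show ∀ᵐ x ∂μ, a⁻¹ • x = x
      filter_upwards [ha] with x hx
      conv_lhs => rw [← hx]
      simp }
  refine ⟨H, ?_⟩
  have key : ∀ g : G, ∀ᵐ x ∂μ, (g ∈ H ↔ g • x = x) := by
    intro g
    by_cases hg : g ∈ H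
    · filter_upwards [hg] with x hx
      exact ⟨fun _ => hx, fun _ => hg⟩
    · have h0 : μ {x : X | g • x = x} = 0 := by
        rcases h01 g with h | h
        · exact h
        · exfalso
          apply hg
          have : μ {x : X | g • x = x}ᶜ = 0 := by
            rw [measure_compl (hfix g) (measure_ne_top μ _), h, measure_univ]
            simp
          exact (ae_iff.2 (by simpa [Set.compl_def] using this))
      have : ∀ᵐ x ∂μ, ¬ (g • x = x) := by
        rw [ae_iff]
        simpa using h0
      filter_upwards [this] with x hx
      exact ⟨fun h => absurd h hg, fun h => absurd h hx⟩
  have := ae_all_iff.2 key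
  filter_upwards [this] with x hx
  ext g
  rw [MulAction.mem_stabilizer_iff]
  exact (hx g).symm
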